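/- Let $f: \mathbb{R}^d \to \mathbb{R}$ be $L$-smooth and satisfy the gradient-domination property $\|\nabla f(x)\|^2 \ge 2\mu(f(x) - f(x^*))$ for all $x$, where $x^* \in \arg\min f$. Run AQGD with step-size $\alpha = 1/(6L)$, contraction factor $\gamma$ with $9\gamma^2 \le 1 - \frac{1}{12\kappa}$ where $\kappa = L/\mu$, quantizer satisfying $\|i_t - \tilde{i}_t\| \le \gamma R_t$ when $\|i_t\| \le R_t$, range update $R_{t+1} = \gamma R_t + \alpha L\|g_t\|$, initialization $g_{-1}=0$, $\|\nabla f(x_0)\| \le R_0$. Then for all $t \ge 0$: $f(x_t) - f(x^*) \le (1 - \frac{1}{12\kappa})^t (f(x_0) - f(x^*) + \alpha R_0^2)$. -/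

import Mathlib

set_option maxHeartbeats 1000000

open InnerProductSpace

lemma descent_lemma {d : ℕ} {f : EuclideanSpace ℝ (Fin d) → ℝ}
    {f' : EuclideanSpace ℝ (Fin d) → EuclideanSpace ℝ (Fin d)} {L : ℝ} (hL : 0 ≤ L)
    (hgrad : ∀ y, HasGradientAt f (f' y) y)
    (hLip : ∀ a b, ‖f' a - f' b‖ ≤ L * ‖a - b‖)
    (a v : EuclideanSpace ℝ (Fin d)) :
    f (a + v) ≤ f a + ⟪f' a, v⟫_ℝ + L / 2 * ‖v‖ ^ 2 := by
  set φ : ℝ → ℝ := fun s => f (a + s • v) - s * ⟪f' a, v⟫_ℝ - L / 2 * s ^ 2 * ‖v‖ ^ 2 with hφ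
  have hd : ∀ s : ℝ, HasDerivAt φ
      (⟪f' (a + s • v), v⟫_ℝ - ⟪f' a, v⟫_ℝ - L * s * ‖v‖ ^ 2) s := by
    intro s
    have hg : HasDerivAt (fun s : ℝ => a + s • v) v s := by
      simpa using ((hasDerivAt_id s).smul_const v).const_add a
    have h1 : HasDerivAt (fun s : ℝ => f (a + s • v)) (⟪f' (a + s • v), v⟫_ℝ) s := by
      have := (hgrad (a + s • v)).hasFDerivAt.comp_hasDerivAt s hg
      simpa [InnerProductSpace.toDual_apply_apply, Function.comp_def] using this
    have h2 : HasDerivAt (fun s : ℝ => s * ⟪f' a, v⟫_ℝ) (⟪f' a, v⟫_ℝ) s := by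
      simpa using (hasDerivAt_id s).mul_const (⟪f' a, v⟫_ℝ)
    have h3 : HasDerivAt (fun s : ℝ => L / 2 * s ^ 2 * ‖v‖ ^ 2) (L * s * ‖v‖ ^ 2) s := by
      have : HasDerivAt (fun s : ℝ => s ^ 2) (2 * s) s := by
        simpa using hasDerivAt_pow 2 s
      have := (this.const_mul (L / 2)).mul_const (‖v‖ ^ 2)
      rw [show L * s * ‖v‖ ^ 2 = L / 2 * (2 * s) * ‖v‖ ^ 2 by ring]; exact this
    exact (h1.sub h2).sub h3
  have hmono : φ 1 ≤ φ 0 := by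
    have hderiv0 : ∀ s ∈ Set.Ioo (0:ℝ) 1,
        deriv φ s ≤ 0 := by
      intro s hs
      rw [(hd s).deriv]
      have h1 : ⟪f' (a + s • v) - f' a, v⟫_ℝ ≤ ‖f' (a + s • v) - f' a‖ * ‖v‖ :=
        real_inner_le_norm _ _
      have h2 : ‖f' (a + s • v) - f' a‖ ≤ L * (s * ‖v‖) := by
        have := hLip (a + s • v) a
        simpa [norm_smul, abs_of_nonneg hs.1.le, mul_assoc] using this
      have h3 : ⟪f' (a + s • v), v⟫_ℝ - ⟪f' a, v⟫_ℝ = ⟪f' (a + s • v) - f' a, v⟫_ℝ := by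
        rw [inner_sub_left]
      have hv : (0:ℝ) ≤ ‖v‖ := norm_nonneg v
      nlinarith [norm_nonneg (f' (a + s • v) - f' a)]
    have hc : ContinuousOn φ (Set.Icc 0 1) := fun s _ => (hd s).continuousAt.continuousWithinAt
    have hdiff : DifferentiableOn ℝ φ (Set.Ioo 0 1) := fun s _ => (hd s).differentiableAt.differentiableWithinAt
    have hanti := antitoneOn_of_deriv_nonpos (convex_Icc (0:ℝ) 1) hc
      (by rwa [interior_Icc]) (by rwa [interior_Icc])
    exact hanti (Set.left_mem_Icc.2 zero_le_one) (Set.right_mem_Icc.2 zero_le_one) zero_le_one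
  have h0 : φ 0 = f a := by simp [hφ]
  have h1 : φ 1 = f (a + v) - ⟪f' a, v⟫_ℝ - L / 2 * ‖v‖ ^ 2 := by simp [hφ]
  rw [h0, h1] at hmono
  linarith


lemma aqgd_arith (α μ γ N E G R D F1 : ℝ)
    (hα0 : 0 < α) (hμ : 0 < μ)
    (hN0 : 0 ≤ N) (hE0 : 0 ≤ E) (hG0 : 0 ≤ G) (hR0 : 0 ≤ R) (hD0 : 0 ≤ D)
    (hE : E ≤ γ * R) (hG : G ≤ N + E)
    (hPL : 2 * μ * D ≤ N ^ 2)
    (hdesc : F1 ≤ D - α * (N ^ 2 - N * E) + α / 12 * G ^ 2)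
    (hγρ : 9 * γ ^ 2 ≤ 1 - α * μ / 2) :
    F1 + α * (γ * R + 1 / 6 * G) ^ 2 ≤ (1 - α * μ / 2) * (D + α * R ^ 2) := by
  have hNE : N * E ≤ N ^ 2 / 2 + E ^ 2 / 2 := by nlinarith [sq_nonneg (N - E)]
  have hG2 : G ^ 2 ≤ 2 * N ^ 2 + 2 * E ^ 2 := by
    nlinarith [pow_le_pow_left₀ hG0 hG 2, sq_nonneg (N - E)]
  have step1 : F1 ≤ D - α / 3 * N ^ 2 + 2 * α / 3 * E ^ 2 := by
    have t1 : α * (N * E) ≤ α * (N ^ 2 / 2 + E ^ 2 / 2) :=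
      mul_le_mul_of_nonneg_left hNE hα0.le
    have t2 : α / 12 * G ^ 2 ≤ α / 12 * (2 * N ^ 2 + 2 * E ^ 2) :=
      mul_le_mul_of_nonneg_left hG2 (by positivity)
    nlinarith [t1, t2]
  have step2 : α * (γ * R + 1 / 6 * G) ^ 2
      ≤ 3 * α * γ ^ 2 * R ^ 2 + α / 12 * N ^ 2 + α / 12 * E ^ 2 := by
    have h1 : (γ * R + 1 / 6 * G) ^ 2
        ≤ 3 * γ ^ 2 * R ^ 2 + N ^ 2 / 12 + E ^ 2 / 12 := by
      nlinarith [sq_nonneg (2 * (γ * R) - 1 / 6 * G), hG2]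
    nlinarith [mul_le_mul_of_nonneg_left h1 hα0.le]
  have hEγ : E ^ 2 ≤ γ ^ 2 * R ^ 2 := by
    have := pow_le_pow_left₀ hE0 hE 2
    nlinarith [this]
  have h1 : α / 4 * (2 * μ * D) ≤ α / 4 * N ^ 2 :=
    mul_le_mul_of_nonneg_left hPL (by positivity)
  have h2 : 3 * α / 4 * E ^ 2 ≤ 3 * α / 4 * (γ ^ 2 * R ^ 2) :=
    mul_le_mul_of_nonneg_left hEγ (by positivity)
  have h3 : 9 * γ ^ 2 * (α * R ^ 2) ≤ (1 - α * μ / 2) * (α * R ^ 2) :=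
    mul_le_mul_of_nonneg_right hγρ (by positivity)
  have h4 : 0 ≤ γ ^ 2 * (α * R ^ 2) := by
    have : 0 ≤ γ ^ 2 := sq_nonneg γ
    positivity
  nlinarith [step1, step2, h1, h2, h3, h4]

/-- Convergence of AQGD under smoothness and gradient domination: with
`α = 1/(6L)` and `9γ² ≤ 1 - 1/(12κ)`, `κ = L/μ`, for all `t`,
`f(x_t) - f(x*) ≤ (1 - 1/(12κ))^t (f(x_0) - f(x*) + α R_0²)`. -/

theorem aqgd_convergence {d : ℕ} (f : EuclideanSpace ℝ (Fin d) → ℝ)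
    (f' : EuclideanSpace ℝ (Fin d) → EuclideanSpace ℝ (Fin d))
    (L μ κ α γ : ℝ) (hL : 0 < L) (hμ : 0 < μ) (hκ : κ = L / μ)
    (hα : α = 1 / (6 * L)) (hγ0 : 0 < γ) (hγcond : 9 * γ ^ 2 ≤ 1 - 1 / (12 * κ))
    (hgrad : ∀ y, HasGradientAt f (f' y) y)
    (hLip : ∀ a b, ‖f' a - f' b‖ ≤ L * ‖a - b‖)
    (xstar : EuclideanSpace ℝ (Fin d)) (hmin : ∀ y, f xstar ≤ f y)
    (hPL : ∀ y, 2 * μ * (f y - f xstar) ≤ ‖f' y‖ ^ 2)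
    (x g iv itld : ℕ → EuclideanSpace ℝ (Fin d)) (Rr : ℕ → ℝ)
    (hx : ∀ t, x (t + 1) = x t - α • g t)
    (hi0 : iv 0 = f' (x 0))
    (hi : ∀ t, iv (t + 1) = f' (x (t + 1)) - g t)
    (hg0 : g 0 = itld 0)
    (hg : ∀ t, g (t + 1) = g t + itld (t + 1))
    (hq : ∀ t, ‖iv t‖ ≤ Rr t → ‖iv t - itld t‖ ≤ γ * Rr t)
    (hR : ∀ t, Rr (t + 1) = γ * Rr t + α * L * ‖g t‖)
    (hR0 : ‖f' (x 0)‖ ≤ Rr 0) :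
    ∀ t, f (x t) - f xstar
      ≤ (1 - 1 / (12 * κ)) ^ t * (f (x 0) - f xstar + α * (Rr 0) ^ 2) := by
  have hα0 : 0 < α := by rw [hα]; positivity
  have hαL : α * L = 1 / 6 := by rw [hα]; field_simp
  have hκinv : 1 / (12 * κ) = α * μ / 2 := by
    rw [hκ, hα]
    rw [eq_div_iff (by norm_num : (2:ℝ) ≠ 0), div_mul_eq_mul_div, div_mul_eq_mul_div]
    rw [div_eq_div_iff (by positivity) (by positivity)]
    field_simp
    ring
  set ρ : ℝ := 1 - 1 / (12 * κ) with hρ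
  have hρval : ρ = 1 - α * μ / 2 := by rw [hρ, hκinv]
  have hρpos : 0 < ρ := lt_of_lt_of_le (by positivity) hγcond
  have hγρ : 9 * γ ^ 2 ≤ 1 - α * μ / 2 := hρval ▸ hγcond
  have he : ∀ t, f' (x t) - g t = iv t - itld t := by
    intro t
    cases t with
    | zero => rw [hg0, hi0]
    | succ n => rw [hg n, hi n]; abel
  have key : ∀ t, ‖iv t‖ ≤ Rr t ∧
      f (x t) - f xstar + α * Rr t ^ 2 ≤ ρ ^ t * (f (x 0) - f xstar + α * Rr 0 ^ 2) := by
    intro t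
    induction t with
    | zero => exact ⟨hi0 ▸ hR0, by simp⟩
    | succ n ih =>
      obtain ⟨hin, hVn⟩ := ih
      have hRn : 0 ≤ Rr n := le_trans (norm_nonneg _) hin
      have hE : ‖f' (x n) - g n‖ ≤ γ * Rr n := (he n) ▸ hq n hin
      have hstep : ‖x (n + 1) - x n‖ = α * ‖g n‖ := by
        rw [hx n]
        simp [norm_smul, abs_of_pos hα0]
      have hinv : ‖iv (n + 1)‖ ≤ Rr (n + 1) := by
        rw [hi n, hR n]
        calc ‖f' (x (n + 1)) - g n‖
            ≤ ‖f' (x (n + 1)) - f' (x n)‖ + ‖f' (x n) - g n‖ := by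
              have h : f' (x (n + 1)) - g n
                  = (f' (x (n + 1)) - f' (x n)) + (f' (x n) - g n) := by abel
              rw [h]; exact norm_add_le _ _
          _ ≤ L * ‖x (n + 1) - x n‖ + γ * Rr n := add_le_add (hLip _ _) hE
          _ = γ * Rr n + α * L * ‖g n‖ := by rw [hstep]; ring
      refine ⟨hinv, ?_⟩
      -- descent inequality
      have hdesc := descent_lemma hL.le hgrad hLip (x n) (-(α • g n))
      have hxx : x n + -(α • g n) = x (n + 1) := by rw [hx n]; abel
      rw [hxx] at hdesc
      have hip1 : ⟪f' (x n), -(α • g n)⟫_ℝ = -(α * ⟪f' (x n), g n⟫_ℝ) := by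
        rw [inner_neg_right, real_inner_smul_right]
      have hnrm : ‖-(α • g n)‖ ^ 2 = α ^ 2 * ‖g n‖ ^ 2 := by
        rw [norm_neg, norm_smul, Real.norm_eq_abs, abs_of_pos hα0, mul_pow]
      rw [hip1, hnrm] at hdesc
      have hip2 : ⟪f' (x n), g n⟫_ℝ
          = ‖f' (x n)‖ ^ 2 - ⟪f' (x n), f' (x n) - g n⟫_ℝ := by
        rw [inner_sub_right, real_inner_self_eq_norm_sq]; ring
      have hcs : ⟪f' (x n), f' (x n) - g n⟫_ℝ ≤ ‖f' (x n)‖ * ‖f' (x n) - g n‖ :=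
        real_inner_le_norm _ _
      have hG : ‖g n‖ ≤ ‖f' (x n)‖ + ‖f' (x n) - g n‖ := by
        calc ‖g n‖ = ‖f' (x n) - (f' (x n) - g n)‖ := by congr 1; abel
          _ ≤ ‖f' (x n)‖ + ‖f' (x n) - g n‖ := norm_sub_le _ _
      have hLα2 : L / 2 * (α ^ 2 * ‖g n‖ ^ 2) = α / 12 * ‖g n‖ ^ 2 := by
        rw [hα]; field_simp; ring
      have hdesc2 : f (x (n + 1)) - f xstar
          ≤ (f (x n) - f xstar)
            - α * (‖f' (x n)‖ ^ 2 - ‖f' (x n)‖ * ‖f' (x n) - g n‖)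
            + α / 12 * ‖g n‖ ^ 2 := by
        rw [hip2, hLα2] at hdesc
        have t1 : α * ⟪f' (x n), f' (x n) - g n⟫_ℝ
            ≤ α * (‖f' (x n)‖ * ‖f' (x n) - g n‖) :=
          mul_le_mul_of_nonneg_left hcs hα0.le
        linarith only [hdesc, t1]
      have hD0 : 0 ≤ f (x n) - f xstar := sub_nonneg.2 (hmin (x n))
      have hcore := aqgd_arith α μ γ (‖f' (x n)‖) (‖f' (x n) - g n‖) (‖g n‖) (Rr n)
        (f (x n) - f xstar) (f (x (n + 1)) - f xstar) hα0 hμ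
        (norm_nonneg _) (norm_nonneg _) (norm_nonneg _) hRn hD0
        hE hG (hPL (x n)) hdesc2 hγρ
      have hR6 : Rr (n + 1) = γ * Rr n + 1 / 6 * ‖g n‖ := by
        rw [hR n, hαL]
      rw [← hR6, ← hρval] at hcore
      calc f (x (n + 1)) - f xstar + α * Rr (n + 1) ^ 2
          ≤ ρ * (f (x n) - f xstar + α * Rr n ^ 2) := hcore
        _ ≤ ρ * (ρ ^ n * (f (x 0) - f xstar + α * Rr 0 ^ 2)) :=
            mul_le_mul_of_nonneg_left hVn hρpos.le
        _ = ρ ^ (n + 1) * (f (x 0) - f xstar + α * Rr 0 ^ 2) := by ring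
  intro t
  obtain ⟨hit, hVt⟩ := key t
  have hterm : 0 ≤ α * Rr t ^ 2 := by positivity
  linarith only [hVt, hterm]
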